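/- Let K be a finite simplicial complex, f a generic injective filtration function on K, [α] ∈ H_n(K^f) a class born at a and terminating at b, and let t₀ = max{ ε ∈ (0,(b−a)/2] : |Σ_ε| = 1 } with Σ_{t₀} = {Δ₁}. Then Δ₁ is a maximal simplex (has no proper coface) in the subcomplex K^f_{f(Δ₁)+2s} for every s < t₀. -/

import Mathlib

open scoped BigOperators

/-- A finite simplicial complex on vertex type `V`: a finite family of nonempty
finite vertex sets closed under passing to nonempty subsets. -/
structure SComplex (V : Type*) where
  faces : Finset (Finset V)
  nonempty_of_mem : ∀ s ∈ faces, s.Nonempty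
  down_closed : ∀ s ∈ faces, ∀ t ⊆ s, t.Nonempty → t ∈ faces

variable {V : Type*} [LinearOrder V]

/-- `f` is an injective filtration function on `K`: face-monotone and injective on faces. -/
def IsInjFiltrationFn (K : SComplex V) (f : Finset V → ℝ) : Prop :=
  (∀ s ∈ K.faces, ∀ t ∈ K.faces, s ⊆ t → f s ≤ f t) ∧
  (∀ s ∈ K.faces, ∀ t ∈ K.faces, f s = f t → s = t)

/-- The sup-distance between `f` and `g` over the faces of `K` is at most `ε`. -/
def DistLE (K : SComplex V) (f g : Finset V → ℝ) (ε : ℝ) : Prop :=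
  ∀ s ∈ K.faces, |f s - g s| ≤ ε

/-- The sublevel subcomplex `K^f_r = f⁻¹((-∞, r])`. -/
noncomputable def sublevel (K : SComplex V) (f : Finset V → ℝ) (r : ℝ) : Finset (Finset V) :=
  K.faces.filter (fun s => f s ≤ r)

variable (𝔽 : Type*) [Field 𝔽]

/-- The simplicial boundary operator on chains (finitely supported functions on
simplices), with signs determined by the linear order on vertices. -/
noncomputable def bdry : (Finset V →₀ 𝔽) →ₗ[𝔽] (Finset V →₀ 𝔽) :=
  Finsupp.lsum 𝔽 (fun s => ∑ x ∈ s,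
    ((-1 : 𝔽) ^ (s.filter (fun y => y < x)).card) • Finsupp.lsingle (s.erase x))

/-- The submodule of `n`-chains supported on simplices of `L` (of cardinality `n+1`). -/
def chainsIn (L : Finset (Finset V)) (n : ℕ) : Submodule 𝔽 (Finset V →₀ 𝔽) where
  carrier := {c | ∀ s ∈ c.support, s ∈ L ∧ s.card = n + 1}
  add_mem' := by
    intro c d hc hd s hs
    rcases Finset.mem_union.mp (Finsupp.support_add hs) with h | h
    · exact hc s h
    · exact hd s h
  zero_mem' := by intro s hs; simp at hs
  smul_mem' := by
    intro a c hc s hs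
    exact hc s (Finsupp.support_smul hs)

/-- `n`-cycles supported in `L`. -/
noncomputable def cyclesIn (L : Finset (Finset V)) (n : ℕ) : Submodule 𝔽 (Finset V →₀ 𝔽) :=
  chainsIn 𝔽 L n ⊓ LinearMap.ker (bdry 𝔽)

/-- `n`-boundaries of `(n+1)`-chains supported in `L`. -/
noncomputable def boundariesIn (L : Finset (Finset V)) (n : ℕ) : Submodule 𝔽 (Finset V →₀ 𝔽) :=
  (chainsIn 𝔽 L (n + 1)).map (bdry 𝔽)

/-- `α` is an `n`-cycle in the subcomplex `L`. -/
def IsCycleIn (L : Finset (Finset V)) (n : ℕ) (α : Finset V →₀ 𝔽) : Prop :=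
  α ∈ cyclesIn 𝔽 L n

/-- The class of `α` is trivial in `H_n(L)`. -/
def TrivialIn (L : Finset (Finset V)) (n : ℕ) (α : Finset V →₀ 𝔽) : Prop :=
  α ∈ boundariesIn 𝔽 L n

/-- `α` and `β` are homologous in `L`. -/
def HomologousIn (L : Finset (Finset V)) (n : ℕ) (α β : Finset V →₀ 𝔽) : Prop :=
  α - β ∈ boundariesIn 𝔽 L n

/-- The homology class `[α] ∈ H_n(K^f_a)` is born at `a`: it is a nontrivial cycle
at level `a` and does not come from any strictly earlier level. -/
def BornAt (K : SComplex V) (f : Finset V → ℝ) (n : ℕ) (α : Finset V →₀ 𝔽) (a : ℝ) : Prop :=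
  IsCycleIn 𝔽 (sublevel K f a) n α ∧ ¬ TrivialIn 𝔽 (sublevel K f a) n α ∧
  ∀ q < a, ¬ ∃ β, IsCycleIn 𝔽 (sublevel K f q) n β ∧ HomologousIn 𝔽 (sublevel K f a) n α β

/-- The class `[α]` terminates at level `b` in the filtration `K^f`. -/
def TerminatesAt (K : SComplex V) (f : Finset V → ℝ) (n : ℕ) (α : Finset V →₀ 𝔽) (b : ℝ) : Prop :=
  TrivialIn 𝔽 (sublevel K f b) n α ∧ ∀ q < b, ¬ TrivialIn 𝔽 (sublevel K f q) n α

/-- `Δ` is the terminal simplex of `[α]` in the filtration `K^f`: the simplex added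
at the level where `[α]` terminates. -/
def TerminalSimplex (K : SComplex V) (f : Finset V → ℝ) (n : ℕ) (α : Finset V →₀ 𝔽)
    (Δ : Finset V) : Prop :=
  Δ ∈ K.faces ∧ TerminatesAt 𝔽 K f n α (f Δ)

/-- `Σ_ε`: the set of terminal simplices of `[α]` over all injective filtration
functions within sup-distance `ε` of `f`. -/
def TermSet (K : SComplex V) (f : Finset V → ℝ) (n : ℕ) (α : Finset V →₀ 𝔽) (ε : ℝ) :
    Set (Finset V) :=
  {Δ | ∃ g, IsInjFiltrationFn K g ∧ DistLE K f g ε ∧ TerminalSimplex 𝔽 K g n α Δ}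

/-- `τ` gives birth to a class in `H_n(K^f)`. -/
def IsBirthSimplex (K : SComplex V) (f : Finset V → ℝ) (n : ℕ) (τ : Finset V) : Prop :=
  τ ∈ K.faces ∧ ∃ β : Finset V →₀ 𝔽, BornAt 𝔽 K f n β (f τ)

/-- `τ` terminates a class in `H_n(K^f)`. -/
def IsTerminalSimplexOf (K : SComplex V) (f : Finset V → ℝ) (n : ℕ) (τ : Finset V) : Prop :=
  τ ∈ K.faces ∧ ∃ (β : Finset V →₀ 𝔽) (a : ℝ),
    BornAt 𝔽 K f n β a ∧ TerminatesAt 𝔽 K f n β (f τ)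

/-- The linear order on the faces of `K` induced by `g`. -/
def inducedRel (K : SComplex V) (g : Finset V → ℝ) :
    {s // s ∈ K.faces} → {s // s ∈ K.faces} → Prop :=
  fun s t => g s.1 < g t.1

/-- `Π_ε`: the set of orders on the faces of `K` induced by injective filtration
functions within sup-distance `ε` of `f`. -/
def OrderSet (K : SComplex V) (f : Finset V → ℝ) (ε : ℝ) :
    Set ({s // s ∈ K.faces} → {s // s ∈ K.faces} → Prop) :=
  {r | ∃ g, IsInjFiltrationFn K g ∧ DistLE K f g ε ∧ r = inducedRel K g}

/-- `f` is generic: equal absolute differences of `f`-values occur only for the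
same unordered pair of faces. -/
def Generic (K : SComplex V) (f : Finset V → ℝ) : Prop :=
  ∀ s ∈ K.faces, ∀ t ∈ K.faces, ∀ s' ∈ K.faces, ∀ t' ∈ K.faces,
    s ≠ t → s' ≠ t' → |f s - f t| = |f s' - f t'| →
    (s = s' ∧ t = t') ∨ (s = t' ∧ t = s')

/-- The rank of the map `H_n(K^f_p) → H_n(K^f_q)`, realized as the dimension of
the image of the cycles at level `p` in the quotient by boundaries at level `q`. -/
noncomputable def persRank (K : SComplex V) (f : Finset V → ℝ) (n : ℕ) (p q : ℝ) : ℕ :=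
  Module.finrank 𝔽
    ↥(Submodule.map (boundariesIn 𝔽 (sublevel K f q) n).mkQ (cyclesIn 𝔽 (sublevel K f p) n))

/-- `[a, b)` is a bar of the `n`-th persistence module of `K^f`: the standard
inclusion–exclusion of ranks equals `1` for all sufficiently small offsets. -/
def IsBar (K : SComplex V) (f : Finset V → ℝ) (n : ℕ) (a b : ℝ) : Prop :=
  a < b ∧ ∃ δ > 0, ∀ ε : ℝ, 0 < ε → ε < δ →
    persRank 𝔽 K f n a (b - ε) + persRank 𝔽 K f n (a - ε) b
      = persRank 𝔽 K f n a b + persRank 𝔽 K f n (a - ε) (b - ε) + 1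

section Aux
variable {V : Type*} [LinearOrder V] (𝔽 : Type*) [Field 𝔽]

lemma bdry_single (s : Finset V) (r : 𝔽) :
    bdry 𝔽 (Finsupp.single s r) =
      ∑ x ∈ s, ((-1 : 𝔽) ^ (s.filter (fun y => y < x)).card) • Finsupp.single (s.erase x) r := by
  rw [bdry, Finsupp.lsum_single]
  simp [Finsupp.lsingle]

lemma sign_aux (s : Finset V) {x y : V} (hx : x ∈ s) (hy : y ∈ s) (hxy : x ≠ y) :
    ((-1:𝔽) ^ (s.filter (fun z => z < x)).card) *
        ((-1:𝔽) ^ ((s.erase x).filter (fun z => z < y)).card)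
      + ((-1:𝔽) ^ (s.filter (fun z => z < y)).card) *
        ((-1:𝔽) ^ ((s.erase y).filter (fun z => z < x)).card) = 0 := by
  have key : ∀ {u w : V}, u ∈ s → w ∈ s → u < w →
      ((-1:𝔽) ^ (s.filter (fun z => z < u)).card) *
          ((-1:𝔽) ^ ((s.erase u).filter (fun z => z < w)).card)
        + ((-1:𝔽) ^ (s.filter (fun z => z < w)).card) *
          ((-1:𝔽) ^ ((s.erase w).filter (fun z => z < u)).card) = 0 := by
    intro u w hu hw huw
    have h1 : (s.erase w).filter (fun z => z < u) = s.filter (fun z => z < u) := by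
      rw [Finset.filter_erase, Finset.erase_eq_of_notMem]
      simp only [Finset.mem_filter, not_and]
      intro _; exact not_lt.2 huw.le
    have h2 : (s.erase u).filter (fun z => z < w) = (s.filter (fun z => z < w)).erase u := by
      rw [Finset.filter_erase]
    have hmem : u ∈ s.filter (fun z => z < w) := Finset.mem_filter.2 ⟨hu, huw⟩
    have h3 : (s.filter (fun z => z < w)).card
        = ((s.filter (fun z => z < w)).erase u).card + 1 := by
      rw [Finset.card_erase_of_mem hmem]
      have : 1 ≤ (s.filter (fun z => z < w)).card := Finset.card_pos.2 ⟨u, hmem⟩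
      omega
    rw [h1, h2, h3, pow_succ]
    ring
  rcases hxy.lt_or_gt with h | h
  · exact key hx hy h
  · rw [add_comm]; exact key hy hx h

lemma bdry_bdry_single (s : Finset V) (r : 𝔽) :
    bdry 𝔽 (bdry 𝔽 (Finsupp.single s r)) = 0 := by
  rw [bdry_single, map_sum]
  have step : ∀ x ∈ s,
      bdry 𝔽 (((-1:𝔽) ^ (s.filter (fun y => y < x)).card) • Finsupp.single (s.erase x) r)
      = ∑ y ∈ s.erase x,
          (((-1:𝔽) ^ (s.filter (fun z => z < x)).card) *
            ((-1:𝔽) ^ ((s.erase x).filter (fun z => z < y)).card)) •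
            Finsupp.single ((s.erase x).erase y) r := by
    intro x hx
    rw [map_smul, bdry_single, Finset.smul_sum]
    simp_rw [smul_smul]
  rw [Finset.sum_congr rfl step, Finset.sum_sigma']
  refine Finset.sum_involution (fun p _ => ⟨p.2, p.1⟩) ?_ ?_ ?_ ?_
  · rintro ⟨x, y⟩ hp
    simp only [Finset.mem_sigma, Finset.mem_erase] at hp
    have hx : x ∈ s := hp.1
    have hyx' : y ≠ x := hp.2.1
    have hy : y ∈ s := hp.2.2
    have hE : (s.erase x).erase y = (s.erase y).erase x := Finset.erase_right_comm
    rw [hE, ← add_smul]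
    rw [sign_aux 𝔽 s hx hy (Ne.symm hyx')]
    simp
  · rintro ⟨x, y⟩ hp _
    simp only [Finset.mem_sigma, Finset.mem_erase] at hp
    intro h
    have := congrArg Sigma.fst h
    simp at this
    exact hp.2.1 this
  · rintro ⟨x, y⟩ hp
    simp only [Finset.mem_sigma, Finset.mem_erase] at hp ⊢
    exact ⟨hp.2.2, fun h => hp.2.1 h.symm, hp.1⟩
  · rintro ⟨x, y⟩ hp; rfl

end Aux

section Aux2
variable {V : Type*} [LinearOrder V] (𝔽 : Type*) [Field 𝔽]

lemma chainsIn_mono {L L' : Finset (Finset V)} (h : L ⊆ L') (n : ℕ) :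
    chainsIn 𝔽 L n ≤ chainsIn 𝔽 L' n := by
  intro c hc s hs
  exact ⟨h (hc s hs).1, (hc s hs).2⟩

lemma boundariesIn_mono {L L' : Finset (Finset V)} (h : L ⊆ L') (n : ℕ) :
    boundariesIn 𝔽 L n ≤ boundariesIn 𝔽 L' n :=
  Submodule.map_mono (chainsIn_mono 𝔽 h (n+1))

lemma eq_zero_of_mem_boundariesIn_empty {n : ℕ} {α : Finset V →₀ 𝔽}
    (h : α ∈ boundariesIn 𝔽 (∅ : Finset (Finset V)) n) : α = 0 := by
  obtain ⟨c, hc, rfl⟩ := h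
  have : c = 0 := by
    ext t
    by_contra ht
    have : t ∈ c.support := Finsupp.mem_support_iff.2 ht
    simpa using (hc t this).1
  rw [this, map_zero]

/-- Every nonzero class that is trivial at some level has a terminal simplex. -/
lemma exists_terminal {K : SComplex V} {h : Finset V → ℝ} {n : ℕ} {α : Finset V →₀ 𝔽}
    (hα : α ≠ 0) {r : ℝ} (htriv : α ∈ boundariesIn 𝔽 (sublevel K h r) n) :
    ∃ Δ ∈ K.faces, h Δ ≤ r ∧ TerminatesAt 𝔽 K h n α (h Δ) := by
  classical
  -- the set of faces at whose level α is trivial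
  set T : Finset (Finset V) :=
    K.faces.filter (fun σ => α ∈ boundariesIn 𝔽 (sublevel K h (h σ)) n) with hT
  have key : ∀ q : ℝ, α ∈ boundariesIn 𝔽 (sublevel K h q) n →
      ∃ σ ∈ T, h σ ≤ q := by
    intro q hq
    have hne : (sublevel K h q).Nonempty := by
      rcases Finset.eq_empty_or_nonempty (sublevel K h q) with he | hne
      · rw [he] at hq
        exact absurd (eq_zero_of_mem_boundariesIn_empty 𝔽 hq) hα
      · exact hne
    obtain ⟨σ₁, hσ₁mem, hσ₁max⟩ := Finset.exists_max_image (sublevel K h q) h hne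
    have hσ₁face : σ₁ ∈ K.faces := (Finset.mem_filter.1 hσ₁mem).1
    have hσ₁le : h σ₁ ≤ q := (Finset.mem_filter.1 hσ₁mem).2
    have heq : sublevel K h (h σ₁) = sublevel K h q := by
      apply Finset.ext
      intro σ
      simp only [sublevel, Finset.mem_filter]
      constructor
      · rintro ⟨h1, h2⟩; exact ⟨h1, h2.trans hσ₁le⟩
      · rintro ⟨h1, h2⟩; exact ⟨h1, hσ₁max σ (Finset.mem_filter.2 ⟨h1, h2⟩)⟩
    refine ⟨σ₁, Finset.mem_filter.2 ⟨hσ₁face, ?_⟩, hσ₁le⟩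
    rw [heq]; exact hq
  obtain ⟨σ₁, hσ₁T, hσ₁le⟩ := key r htriv
  have hTne : T.Nonempty := ⟨σ₁, hσ₁T⟩
  obtain ⟨Δ, hΔT, hΔmin⟩ := Finset.exists_min_image T h hTne
  have hΔface : Δ ∈ K.faces := (Finset.mem_filter.1 hΔT).1
  refine ⟨Δ, hΔface, (hΔmin σ₁ hσ₁T).trans hσ₁le, (Finset.mem_filter.1 hΔT).2, ?_⟩
  intro q hq hq'
  obtain ⟨σ₂, hσ₂T, hσ₂le⟩ := key q hq'
  exact absurd (hΔmin σ₂ hσ₂T) (by linarith)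

lemma support_bdry_single {s : Finset V} {r : 𝔽} {t : Finset V}
    (ht : t ∈ (bdry 𝔽 (Finsupp.single s r)).support) : ∃ x ∈ s, t = s.erase x := by
  rw [bdry_single] at ht
  have h := Finsupp.mem_support_iff.1 ht
  by_contra hc
  push_neg at hc
  apply h
  rw [Finsupp.finset_sum_apply]
  refine Finset.sum_eq_zero ?_
  intro x hx
  rw [Finsupp.smul_apply, Finsupp.single_apply, if_neg (fun he => hc x hx he.symm)]
  simp

lemma bdry_single_insert_apply {Δ : Finset V} {v : V} (hv : v ∉ Δ) :
    (bdry 𝔽 (Finsupp.single (insert v Δ) (1:𝔽))) Δ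
      = (-1 : 𝔽) ^ ((insert v Δ).filter (fun y => y < v)).card := by
  rw [bdry_single, Finsupp.finset_sum_apply]
  rw [Finset.sum_eq_single_of_mem v (Finset.mem_insert_self v Δ)]
  · rw [Finsupp.smul_apply, Finsupp.single_apply,
      if_pos (Finset.erase_insert hv), smul_eq_mul, mul_one]
  · intro x hx hxv
    rw [Finsupp.smul_apply, Finsupp.single_apply, if_neg, smul_zero]
    intro he
    have : v ∈ (insert v Δ).erase x :=
      Finset.mem_erase.2 ⟨fun h => hxv h.symm, Finset.mem_insert_self v Δ⟩
    rw [he] at this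
    exact hv this

end Aux2

set_option maxHeartbeats 1000000 in
/-- Proposition `PropStep2`(2): the unique terminal simplex
`Δ₁` at the maximal rigid scale `t₀` is a maximal simplex of `K^f_{f(Δ₁)+2s}`
for all `s < t₀`. -/
theorem stmt10 {V : Type*} [LinearOrder V] (𝔽 : Type*) [Field 𝔽]
    (K : SComplex V) (f : Finset V → ℝ) (hf : IsInjFiltrationFn K f) (hgen : Generic K f)
    (n : ℕ) (α : Finset V →₀ 𝔽) (a b : ℝ)
    (hborn : BornAt 𝔽 K f n α a) (hterm : TerminatesAt 𝔽 K f n α b)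
    (t₀ : ℝ) (Δ₁ : Finset V)
    (ht₀ : IsGreatest {ε : ℝ | 0 < ε ∧ ε ≤ (b - a) / 2 ∧ (TermSet 𝔽 K f n α ε).ncard = 1} t₀)
    (hΔ : TermSet 𝔽 K f n α t₀ = {Δ₁}) :
    ∀ s : ℝ, s < t₀ → ∀ τ ∈ sublevel K f (f Δ₁ + 2 * s), ¬ Δ₁ ⊂ τ := by
  classical
  have hα0 : α ≠ 0 := by
    intro h
    exact hborn.2.1 (h ▸ (boundariesIn 𝔽 (sublevel K f a) n).zero_mem)
  have ht₀pos : 0 < t₀ := ht₀.1.1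
  have hdistff : DistLE K f f t₀ := by
    intro σ _; simp only [sub_self, abs_zero]; exact ht₀pos.le
  -- Step 1 : f Δ₁ = b and Δ₁ ∈ K.faces
  obtain ⟨Δs, hΔsface, hΔsle, hΔsterm⟩ := exists_terminal 𝔽 hα0 hterm.1
  have hΔsb : f Δs = b := by
    rcases lt_or_eq_of_le hΔsle with h | h
    · exact absurd hΔsterm.1 (hterm.2 _ h)
    · exact h
  have hΔs1 : Δs = Δ₁ := by
    have hmem : Δs ∈ TermSet 𝔽 K f n α t₀ := ⟨f, hf, hdistff, hΔsface, hΔsterm⟩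
    rw [hΔ] at hmem; exact hmem
  have hΔ₁face : Δ₁ ∈ K.faces := hΔs1 ▸ hΔsface
  have hfΔ₁ : f Δ₁ = b := hΔs1 ▸ hΔsb
  -- Step 2/3 : the killing chain uses Δ₁
  obtain ⟨c, hc, hcb⟩ := hterm.1
  have hcΔ₁ : c Δ₁ ≠ 0 := by
    intro h0
    have hsupp : c.support.Nonempty := by
      rw [Finsupp.support_nonempty_iff]
      intro h; rw [h, map_zero] at hcb; exact hα0 hcb.symm
    obtain ⟨σm, hσm, hmax⟩ := Finset.exists_max_image c.support f hsupp
    have h1 := (hc σm hσm).1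
    have hface := (Finset.mem_filter.1 h1).1
    have hle := (Finset.mem_filter.1 h1).2
    have hq : f σm < b := by
      rcases lt_or_eq_of_le hle with h | h
      · exact h
      · exfalso
        have : σm = Δ₁ := hf.2 _ hface _ hΔ₁face (by rw [h, hfΔ₁])
        rw [this] at hσm
        exact Finsupp.mem_support_iff.1 hσm h0
    refine hterm.2 (f σm) hq ⟨c, ?_, hcb⟩
    intro σ hσ
    exact ⟨Finset.mem_filter.2 ⟨(Finset.mem_filter.1 (hc σ hσ).1).1, hmax σ hσ⟩, (hc σ hσ).2⟩
  have hΔ₁card : Δ₁.card = n + 1 + 1 := (hc Δ₁ (Finsupp.mem_support_iff.2 hcΔ₁)).2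
  -- Step 4 : introduce the alleged coface
  intro s hs τA hτA hsubA
  have hτAface : τA ∈ K.faces := (Finset.mem_filter.1 hτA).1
  have hτAle : f τA ≤ f Δ₁ + 2 * s := (Finset.mem_filter.1 hτA).2
  -- Step 5/6 : minimal coface τ = insert v Δ₁
  obtain ⟨τm, hτmC, hτmmin⟩ := Finset.exists_min_image
    (K.faces.filter (fun ρ => Δ₁ ⊂ ρ)) f ⟨τA, Finset.mem_filter.2 ⟨hτAface, hsubA⟩⟩
  have hτmface : τm ∈ K.faces := (Finset.mem_filter.1 hτmC).1
  have hΔ₁τm : Δ₁ ⊂ τm := (Finset.mem_filter.1 hτmC).2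
  obtain ⟨v, hvτ, hvΔ⟩ := Finset.exists_of_ssubset hΔ₁τm
  set τ := insert v Δ₁ with hτdef
  have hττm : τ ⊆ τm := Finset.insert_subset hvτ hΔ₁τm.subset
  have hτface : τ ∈ K.faces :=
    K.down_closed τm hτmface τ hττm ⟨v, Finset.mem_insert_self v Δ₁⟩
  have hΔ₁τ : Δ₁ ⊂ τ := Finset.ssubset_insert hvΔ
  have hτmin : ∀ ρ ∈ K.faces, Δ₁ ⊂ ρ → f τ ≤ f ρ := by
    intro ρ hρ hρ2
    have h1 : f τm ≤ f ρ := hτmmin ρ (Finset.mem_filter.2 ⟨hρ, hρ2⟩)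
    have h2 : f τ ≤ f τm := hf.1 τ hτface τm hτmface hττm
    linarith
  have hτcard : τ.card = n + 1 + 1 + 1 := by
    rw [hτdef, Finset.card_insert_of_notMem hvΔ, hΔ₁card]
  have hτles : f τ ≤ f Δ₁ + 2 * s := le_trans (hτmin τA hτAface hsubA) hτAle
  -- Step 7 : numbers
  have hfΔτ : f Δ₁ < f τ :=
    lt_of_le_of_ne (hf.1 Δ₁ hΔ₁face τ hτface hΔ₁τ.subset)
      (fun h => hΔ₁τ.ne (hf.2 _ hΔ₁face _ hτface h))
  set d := (f τ - f Δ₁) / 2 with hd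
  have hdpos : 0 < d := by rw [hd]; linarith
  have hds : d ≤ s := by rw [hd]; linarith
  have hdt : d < t₀ := lt_of_le_of_lt hds hs
  set m := f Δ₁ + d with hm
  have hmτ : f τ = m + d := by rw [hm, hd]; ring
  have hΔ₁m : f Δ₁ < m := by rw [hm]; linarith
  -- Step 8 : m is not a value of f on faces
  have hmval : ∀ σ ∈ K.faces, f σ ≠ m := by
    intro σ hσ he
    have h1 : σ ≠ Δ₁ := by intro h; rw [h] at he; linarith
    have h2 : σ ≠ τ := by intro h; rw [h] at he; rw [hmτ] at he; linarith
    have habs : |f Δ₁ - f σ| = |f σ - f τ| := by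
      rw [he, hmτ]
      rw [abs_of_nonpos (by linarith), abs_of_nonpos (by linarith)]
      ring
    rcases hgen Δ₁ hΔ₁face σ hσ σ hσ τ hτface (Ne.symm h1) h2 habs with ⟨hA, hB⟩ | ⟨hA, _⟩
    · exact hΔ₁τ.ne (hA.trans hB)
    · exact hΔ₁τ.ne hA
  -- Step 9 : the gap γ and the offset η
  obtain ⟨σγ, hσγ, hγmin⟩ := Finset.exists_min_image K.faces (fun σ => |f σ - m|)
    ⟨Δ₁, hΔ₁face⟩
  set γ := |f σγ - m| with hγdef
  have hγpos : 0 < γ := abs_pos.2 (sub_ne_zero.2 (hmval σγ hσγ))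
  have hγle : ∀ σ ∈ K.faces, γ ≤ |f σ - m| := hγmin
  have hγd : γ ≤ d := by
    have h1 := hγle τ hτface
    rw [hmτ] at h1
    rw [abs_of_nonneg (by linarith)] at h1
    linarith
  set η := min γ (t₀ - d) / 2 with hηdef
  have hηpos : 0 < η := by
    rw [hηdef]
    have : 0 < min γ (t₀ - d) := lt_min hγpos (by linarith)
    linarith
  have hηγ : η < γ := by
    rw [hηdef]
    have h1 : min γ (t₀ - d) ≤ γ := min_le_left _ _
    linarith
  have hηt : d + η < t₀ := by
    rw [hηdef]
    have h1 : min γ (t₀ - d) ≤ t₀ - d := min_le_right _ _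
    linarith
  have hηd : η < d := lt_of_lt_of_le hηγ hγd
  -- Step 10 : the perturbed filtration h
  set h : Finset V → ℝ := fun σ =>
    if σ ⊂ τ ∧ m < f σ then m - η * (f τ - f σ) / d
    else if σ = Δ₁ then m + η else f σ with hhdef
  have hval : ∀ σ, h σ =
      if σ ⊂ τ ∧ m < f σ then m - η * (f τ - f σ) / d
      else if σ = Δ₁ then m + η else f σ := fun σ => rfl
  have hPlt : ∀ σ ∈ K.faces, σ ⊂ τ → f σ < f τ := by
    intro σ hσ hsub
    exact lt_of_le_of_ne (hf.1 _ hσ _ hτface hsub.subset)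
      (fun he => hsub.ne (hf.2 _ hσ _ hτface he))
  have hPval : ∀ σ ∈ K.faces, σ ⊂ τ → m < f σ →
      (m - η < h σ ∧ h σ < m) := by
    intro σ hσ hsub hml
    rw [hval σ, if_pos ⟨hsub, hml⟩]
    have h1 : f σ < f τ := hPlt σ hσ hsub
    have h2 : 0 < f τ - f σ := by linarith
    have h3 : f τ - f σ < d := by rw [hmτ] at h1 ⊢; linarith
    constructor
    · have : η * (f τ - f σ) / d < η := by
        rw [div_lt_iff₀ hdpos]
        nlinarith
      linarith
    · have : 0 < η * (f τ - f σ) / d := by positivity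
      linarith
  have hΔ₁notP : ¬ (Δ₁ ⊂ τ ∧ m < f Δ₁) := by
    rintro ⟨_, h2⟩; linarith
  have hvalΔ₁ : h Δ₁ = m + η := by
    rw [hval Δ₁, if_neg hΔ₁notP, if_pos rfl]
  have hOval : ∀ σ, σ ≠ Δ₁ → ¬ (σ ⊂ τ ∧ m < f σ) → h σ = f σ := by
    intro σ h1 h2
    rw [hval σ, if_neg h2, if_neg h1]
  have hOgap : ∀ σ ∈ K.faces, σ ≠ Δ₁ → ¬ (σ ⊂ τ ∧ m < f σ) →
      (f σ ≤ m - γ ∨ m + γ ≤ f σ) := by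
    intro σ hσ _ _
    have h1 := hγle σ hσ
    rcases le_or_gt (f σ) m with h2 | h2
    · left
      rw [abs_of_nonpos (by linarith)] at h1
      linarith
    · right
      rw [abs_of_nonneg (by linarith)] at h1
      linarith
  -- h is a filtration
  have hhmono : ∀ s₁ ∈ K.faces, ∀ s₂ ∈ K.faces, s₁ ⊆ s₂ → h s₁ ≤ h s₂ := by
    intro σ₁ h1 σ₂ h2 hsub
    rcases eq_or_ne σ₁ σ₂ with he | hne
    · rw [he]
    have hssub : σ₁ ⊂ σ₂ := ssubset_of_subset_of_ne hsub hne
    have hflt : f σ₁ < f σ₂ :=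
      lt_of_le_of_ne (hf.1 _ h1 _ h2 hsub) (fun he' => hne (hf.2 _ h1 _ h2 he'))
    by_cases hP1 : σ₁ ⊂ τ ∧ m < f σ₁
    · -- σ₁ moved into (m-η, m)
      have hb1 := hPval σ₁ h1 hP1.1 hP1.2
      by_cases hP2 : σ₂ ⊂ τ ∧ m < f σ₂
      · -- both moved : order preserved
        rw [hval σ₁, if_pos hP1, hval σ₂, if_pos hP2]
        have h6 : η * (f τ - f σ₂) ≤ η * (f τ - f σ₁) := by nlinarith [hηpos.le]
        have h5 : η * (f τ - f σ₂) / d ≤ η * (f τ - f σ₁) / d := by gcongr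
        linarith
      · rcases eq_or_ne σ₂ Δ₁ with he2 | hne2
        · -- σ₂ = Δ₁ impossible : f σ₁ > m > f Δ₁
          exfalso; rw [he2] at hflt; linarith
        · rw [hOval σ₂ hne2 hP2]
          linarith
    · rcases eq_or_ne σ₁ Δ₁ with he1 | hne1
      · -- σ₁ = Δ₁ : σ₂ is a proper coface, so f σ₂ ≥ f τ
        have hge : f τ ≤ f σ₂ := hτmin σ₂ h2 (he1 ▸ hssub)
        have hP2 : ¬ (σ₂ ⊂ τ ∧ m < f σ₂) := by
          rintro ⟨h3, _⟩
          exact absurd (hPlt σ₂ h2 h3) (not_lt.2 hge)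
        have hne2 : σ₂ ≠ Δ₁ := fun he => hne (he1.trans he.symm)
        rw [he1, hvalΔ₁, hOval σ₂ hne2 hP2]
        rw [hmτ] at hge
        linarith
      · -- σ₁ unmoved
        rw [hOval σ₁ hne1 hP1]
        rcases eq_or_ne σ₂ Δ₁ with he2 | hne2
        · -- σ₂ = Δ₁ : f σ₁ < f Δ₁ < m + η
          rw [he2, hvalΔ₁]
          rw [he2] at hflt
          linarith
        · by_cases hP2 : σ₂ ⊂ τ ∧ m < f σ₂
          · -- σ₂ moved down ; then σ₁ ⊂ τ and f σ₁ < m, so f σ₁ ≤ m - γ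
            have hsub1 : σ₁ ⊂ τ := hssub.trans hP2.1
            have hle1 : ¬ m < f σ₁ := fun hml => hP1 ⟨hsub1, hml⟩
            have hgap := hOgap σ₁ h1 hne1 hP1
            have hb2 := hPval σ₂ h2 hP2.1 hP2.2
            rcases hgap with hg | hg
            · linarith
            · linarith
          · rw [hOval σ₂ hne2 hP2]
            linarith
  have hhinj : ∀ s₁ ∈ K.faces, ∀ s₂ ∈ K.faces, h s₁ = h s₂ → s₁ = s₂ := by
    intro σ₁ h1 σ₂ h2 heq
    by_cases hP1 : σ₁ ⊂ τ ∧ m < f σ₁ <;> by_cases hP2 : σ₂ ⊂ τ ∧ m < f σ₂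
    · -- both moved
      have := heq
      rw [hval σ₁, if_pos hP1, hval σ₂, if_pos hP2] at this
      have hfe : f σ₁ = f σ₂ := by
        have h7 : η * (f τ - f σ₁) / d = η * (f τ - f σ₂) / d := by linarith
        rw [div_left_inj' hdpos.ne', mul_right_inj' hηpos.ne'] at h7
        linarith
      exact hf.2 _ h1 _ h2 hfe
    · exfalso
      have hb1 := hPval σ₁ h1 hP1.1 hP1.2
      rcases eq_or_ne σ₂ Δ₁ with he2 | hne2
      · rw [he2, hvalΔ₁] at heq; linarith
      · rw [hOval σ₂ hne2 hP2] at heq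
        rcases hOgap σ₂ h2 hne2 hP2 with hg | hg <;> linarith
    · exfalso
      have hb2 := hPval σ₂ h2 hP2.1 hP2.2
      rcases eq_or_ne σ₁ Δ₁ with he1 | hne1
      · rw [he1, hvalΔ₁] at heq; linarith
      · rw [hOval σ₁ hne1 hP1] at heq
        rcases hOgap σ₁ h1 hne1 hP1 with hg | hg <;> linarith
    · rcases eq_or_ne σ₁ Δ₁ with he1 | hne1 <;> rcases eq_or_ne σ₂ Δ₁ with he2 | hne2
      · rw [he1, he2]
      · exfalso
        rw [he1, hvalΔ₁, hOval σ₂ hne2 hP2] at heq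
        rcases hOgap σ₂ h2 hne2 hP2 with hg | hg <;> linarith
      · exfalso
        rw [he2, hvalΔ₁, hOval σ₁ hne1 hP1] at heq
        rcases hOgap σ₁ h1 hne1 hP1 with hg | hg <;> linarith
      · rw [hOval σ₁ hne1 hP1, hOval σ₂ hne2 hP2] at heq
        exact hf.2 _ h1 _ h2 heq
  have hhfilt : IsInjFiltrationFn K h := ⟨hhmono, hhinj⟩
  -- h is within t₀ of f
  have hhdist : DistLE K f h t₀ := by
    intro σ hσ
    by_cases hP : σ ⊂ τ ∧ m < f σ
    · have hb := hPval σ hσ hP.1 hP.2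
      have hlt : f σ < f τ := hPlt σ hσ hP.1
      rw [abs_of_nonneg (by linarith)]
      rw [hmτ] at hlt
      linarith
    · rcases eq_or_ne σ Δ₁ with he | hne
      · rw [he, hvalΔ₁]
        rw [abs_of_nonpos (by linarith)]
        linarith
      · rw [hOval σ hne hP, sub_self, abs_zero]
        exact ht₀pos.le
  -- Step 11 : the corrected chain c'
  have hcoef : (bdry 𝔽 (Finsupp.single τ (1:𝔽))) Δ₁
      = (-1:𝔽) ^ (τ.filter (fun y => y < v)).card := by
    rw [hτdef]; exact bdry_single_insert_apply 𝔽 hvΔ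
  set ε₁ : 𝔽 := (-1:𝔽) ^ (τ.filter (fun y => y < v)).card with hε₁def
  have hε₁sq : ε₁ * ε₁ = 1 := by
    rw [hε₁def]
    rcases neg_one_pow_eq_or 𝔽 ((τ.filter (fun y => y < v)).card) with h' | h' <;>
      rw [h'] <;> ring
  set c' := c - (c Δ₁ * ε₁) • bdry 𝔽 (Finsupp.single τ (1:𝔽)) with hc'def
  have hc'Δ₁ : c' Δ₁ = 0 := by
    rw [hc'def, Finsupp.sub_apply, Finsupp.smul_apply, hcoef, smul_eq_mul,
      mul_assoc, hε₁sq, mul_one, sub_self]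
  have hbdryc' : bdry 𝔽 c' = α := by
    rw [hc'def, map_sub, map_smul, hτdef, bdry_bdry_single, smul_zero, sub_zero, hcb]
  have hsupport : ∀ σ ∈ c'.support, σ ∈ sublevel K h m ∧ σ.card = n + 1 + 1 := by
    intro σ hσ
    have hσΔ₁ : σ ≠ Δ₁ := by
      intro he; rw [he] at hσ; exact (Finsupp.mem_support_iff.1 hσ) hc'Δ₁
    have hσu := Finsupp.support_sub (hc'def ▸ hσ)
    rcases Finset.mem_union.1 hσu with hσc | hσb
    · obtain ⟨hin, hcard⟩ := hc σ hσc
      have hface := (Finset.mem_filter.1 hin).1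
      have hle : f σ ≤ b := (Finset.mem_filter.1 hin).2
      have hσm : f σ < m := by rw [← hfΔ₁] at hle; linarith
      have hP : ¬ (σ ⊂ τ ∧ m < f σ) := by rintro ⟨_, h'⟩; linarith
      refine ⟨Finset.mem_filter.2 ⟨hface, ?_⟩, hcard⟩
      rw [hOval σ hσΔ₁ hP]
      linarith
    · have hσb' : σ ∈ (bdry 𝔽 (Finsupp.single τ (1:𝔽))).support :=
        Finsupp.support_smul hσb
      obtain ⟨x, hx, he⟩ := support_bdry_single 𝔽 hσb'
      have hσsubτ : σ ⊂ τ := he ▸ Finset.erase_ssubset hx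
      have hcard : σ.card = n + 1 + 1 := by
        rw [he, Finset.card_erase_of_mem hx, hτcard]
        omega
      have hface : σ ∈ K.faces :=
        K.down_closed τ hτface σ hσsubτ.subset (Finset.card_pos.1 (by omega))
      refine ⟨Finset.mem_filter.2 ⟨hface, ?_⟩, hcard⟩
      by_cases hP : σ ⊂ τ ∧ m < f σ
      · exact (hPval σ hface hP.1 hP.2).2.le
      · rw [hOval σ hσΔ₁ hP]
        rcases not_and_or.1 hP with h' | h'
        · exact absurd hσsubτ h'
        · linarith [not_lt.1 h']
  have htrivm : α ∈ boundariesIn 𝔽 (sublevel K h m) n :=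
    Submodule.mem_map.2 ⟨c', fun σ hσ => hsupport σ hσ, hbdryc'⟩
  -- Step 12 : a terminal simplex below m, contradiction
  obtain ⟨Δ', hΔ'face, hΔ'le, hΔ'term⟩ := exists_terminal 𝔽 hα0 htrivm
  have hmem2 : Δ' ∈ TermSet 𝔽 K f n α t₀ := ⟨h, hhfilt, hhdist, hΔ'face, hΔ'term⟩
  rw [hΔ] at hmem2
  have he' : Δ' = Δ₁ := hmem2
  rw [he', hvalΔ₁] at hΔ'le
  linarith
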